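/- For every n ≥ 1, if z ∼ N(0, I₂) and v_j = (cos((j−1)π/n), sin((j−1)π/n)) for j = 1,…,n, then E[(min_{1≤j≤n} |⟨z, v_j⟩|)²] = 1 − (n/π) · sin(π/n). -/

import Mathlib

open Real MeasureTheory ProbabilityTheory Filter
open scoped NNReal ENNReal

noncomputable def Gaux (n : ℕ) : ℝ → ℝ :=
  fun θ => ⨅ j : Fin n, (Real.cos (θ - (j : ℝ) * π / n)) ^ 2

lemma exists_iInf_min {ι : Type*} [Finite ι] [Nonempty ι] (f : ι → ℝ) :
    ∃ j, (⨅ i, f i) = f j ∧ ∀ i, f j ≤ f i := by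
  obtain ⟨j, hj⟩ := Finite.exists_min f
  exact ⟨j, le_antisymm (ciInf_le (Set.finite_range f).bddBelow j) (le_ciInf hj), hj⟩

lemma Gaux_cont (n : ℕ) (hn : 1 ≤ n) : Continuous (Gaux n) := by
  haveI : NeZero n := ⟨by omega⟩
  have : Gaux n = fun θ => Finset.univ.inf' Finset.univ_nonempty
      (fun j : Fin n => (Real.cos (θ - (j : ℝ) * π / n)) ^ 2) := by
    ext θ; rw [Gaux, Finset.inf'_univ_eq_ciInf]
  rw [this]
  rw [continuous_iff_continuousAt]
  intro x
  exact ContinuousAt.finset_inf'_apply Finset.univ_nonempty fun j _ =>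
    (((continuous_cos.comp (by continuity)).pow 2).continuousAt)

lemma Gaux_nonneg (n : ℕ) (hn : 1 ≤ n) (θ : ℝ) : 0 ≤ Gaux n θ := by
  haveI : Nonempty (Fin n) := ⟨⟨0, by omega⟩⟩
  exact le_ciInf fun j => sq_nonneg _

lemma Gaux_le_one (n : ℕ) (hn : 1 ≤ n) (θ : ℝ) : Gaux n θ ≤ 1 := by
  haveI : Nonempty (Fin n) := ⟨⟨0, by omega⟩⟩
  refine le_trans (ciInf_le (Set.finite_range _).bddBelow ⟨0, by omega⟩) ?_
  calc (Real.cos (θ - ((⟨0, by omega⟩ : Fin n) : ℝ) * π / n)) ^ 2 ≤ 1 ^ 2 := by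
        rw [sq_abs _ |>.symm, one_pow]
        have := abs_cos_le_one (θ - ((⟨0, by omega⟩ : Fin n) : ℝ) * π / n)
        nlinarith [abs_nonneg (Real.cos (θ - ((⟨0, by omega⟩ : Fin n) : ℝ) * π / n))]
    _ = 1 := one_pow 2

lemma L1 (n : ℕ) (hn : 1 ≤ n) (r θ : ℝ) (hr : 0 ≤ r) :
    (⨅ j : Fin n, |r * Real.cos θ * Real.cos ((j : ℝ) * π / n)
        + r * Real.sin θ * Real.sin ((j : ℝ) * π / n)|) ^ 2
      = r ^ 2 * Gaux n θ := by
  haveI : Nonempty (Fin n) := ⟨⟨0, by omega⟩⟩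
  have hterm : ∀ j : Fin n, r * Real.cos θ * Real.cos ((j : ℝ) * π / n)
      + r * Real.sin θ * Real.sin ((j : ℝ) * π / n) = r * Real.cos (θ - (j : ℝ) * π / n) := by
    intro j; rw [Real.cos_sub]; ring
  obtain ⟨j₀, h₀, hmin⟩ := exists_iInf_min (fun j : Fin n => (Real.cos (θ - (j : ℝ) * π / n)) ^ 2)
  have habs : ∀ a b : ℝ, a ^ 2 ≤ b ^ 2 → |a| ≤ |b| := by
    intro a b h
    rw [← Real.sqrt_sq_eq_abs, ← Real.sqrt_sq_eq_abs]
    exact Real.sqrt_le_sqrt h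
  have key : (⨅ j : Fin n, |r * Real.cos θ * Real.cos ((j : ℝ) * π / n)
      + r * Real.sin θ * Real.sin ((j : ℝ) * π / n)|)
      = r * |Real.cos (θ - (j₀ : ℝ) * π / n)| := by
    refine le_antisymm ?_ (le_ciInf fun j => ?_)
    · refine le_trans (ciInf_le (Set.finite_range _).bddBelow j₀) ?_
      rw [hterm j₀, abs_mul, abs_of_nonneg hr]
    · rw [hterm j, abs_mul, abs_of_nonneg hr]
      exact mul_le_mul_of_nonneg_left (habs _ _ (hmin j)) hr
  rw [key, mul_pow, sq_abs, Gaux, ← h₀]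

lemma cos_key (n m : ℕ) (hn : 1 ≤ n) (hm1 : 1 ≤ m) (hm2 : m < n) (s : ℝ)
    (hs : |s| ≤ π / n) : Real.cos (s - 2 * m * π / n) ≤ Real.cos s := by
  have hπ := Real.pi_pos
  have hn0 : (0:ℝ) < n := by exact_mod_cast Nat.pos_of_ne_zero (by omega)
  set u : ℝ := π / n with hu_def
  have hπu : π = n * u := by rw [hu_def]; field_simp
  have hu : 0 < u := div_pos hπ hn0
  have hm1' : (1:ℝ) ≤ m := by exact_mod_cast hm1
  have hm2' : (m:ℝ) + 1 ≤ n := by exact_mod_cast hm2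
  have hun : u ≤ π := by nlinarith
  have habs := abs_le.1 hs
  have h1 : Real.cos u ≤ Real.cos s := by
    rw [← Real.cos_abs s]
    exact Real.cos_le_cos_of_nonneg_of_le_pi (abs_nonneg s) hun hs
  refine le_trans ?_ h1
  have harg : s - 2 * m * π / n = -(2 * m * u - s) := by
    rw [hπu]; field_simp; ring
  rw [harg, Real.cos_neg]
  set t : ℝ := 2 * m * u - s with ht_def
  have ht1 : u ≤ t := by nlinarith
  have ht2 : t ≤ 2 * π - u := by nlinarith
  rcases le_or_gt t π with h | h
  · exact Real.cos_le_cos_of_nonneg_of_le_pi hu.le h ht1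
  · rw [← Real.cos_two_pi_sub]
    exact Real.cos_le_cos_of_nonneg_of_le_pi hu.le (by linarith) (by linarith)

lemma cos_sq_key (n m : ℕ) (hn : 1 ≤ n) (hm2 : m < n) (θ : ℝ)
    (hθ : θ ∈ Set.Icc (π/2 - π/(2*n)) (π/2 + π/(2*n))) :
    Real.cos θ ^ 2 ≤ Real.cos (θ - m * π / n) ^ 2 := by
  rcases Nat.eq_zero_or_pos m with rfl | hm1
  · simp
  have hπ := Real.pi_pos
  have hn0 : (0:ℝ) < n := by exact_mod_cast Nat.pos_of_ne_zero (by omega)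
  obtain ⟨hθ1, hθ2⟩ := hθ
  rw [Real.cos_sq, Real.cos_sq]
  have key : Real.cos (2 * θ) ≤ Real.cos (2 * (θ - m * π / n)) := by
    set s : ℝ := 2 * θ - π with hs_def
    have hd : π / (2*(n:ℝ)) = (π / n)/2 := by ring
    have hs : |s| ≤ π / n := by
      rw [abs_le]
      constructor <;> [linarith [hd ▸ hθ1]; linarith [hd ▸ hθ2]]
    have e1 : 2 * θ = π + s := by ring
    have e2 : 2 * (θ - m * π / n) = π + (s - 2 * m * π / n) := by ring
    have c1 : ∀ x:ℝ, Real.cos (π + x) = - Real.cos x := fun x => by simp [Real.cos_add]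
    rw [e1, e2, c1, c1]
    exact neg_le_neg (cos_key n m hn hm1 hm2 s hs)
  linarith [key]

lemma Gaux_eq_on (n : ℕ) (hn : 1 ≤ n) (θ : ℝ)
    (hθ : θ ∈ Set.Icc (π/2 - π/(2*n)) (π/2 + π/(2*n))) :
    Gaux n θ = Real.cos θ ^ 2 := by
  haveI : Nonempty (Fin n) := ⟨⟨0, by omega⟩⟩
  refine le_antisymm ?_ (le_ciInf fun j => ?_)
  · refine le_trans (ciInf_le (Set.finite_range _).bddBelow ⟨0, by omega⟩) ?_
    simp
  · exact cos_sq_key n j.val hn j.isLt θ hθ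

lemma Gaux_periodic (n : ℕ) (hn : 1 ≤ n) : Function.Periodic (Gaux n) (π / n) := by
  obtain ⟨m, rfl⟩ : ∃ m, n = m + 1 := ⟨n - 1, by omega⟩
  set n := m + 1 with hn_def
  intro θ
  have hn0 : (0:ℝ) < n := by exact_mod_cast Nat.pos_of_ne_zero (by omega)
  unfold Gaux
  have step : ∀ j : Fin n, Real.cos (θ + π / n - (j : ℝ) * π / n) ^ 2
      = Real.cos (θ - ((j - 1 : Fin n) : ℝ) * π / n) ^ 2 := by
    intro j
    rcases eq_or_ne j 0 with rfl | hj
    · have hv : ((0 - 1 : Fin n) : ℝ) = (n : ℝ) - 1 := by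
        rw [Fin.coe_sub_one]
        simp only [if_pos rfl]
        have : 1 ≤ n := hn
        push_cast [Nat.cast_sub hn]
        rw [hn_def]; push_cast; ring
      have harg : θ + π / n - (((0:Fin n)) : ℝ) * π / n
          = (θ - ((n:ℝ) - 1) * π / n) + π := by
        field_simp
        simp; ring
      rw [harg, hv]
      have : ∀ x : ℝ, Real.cos (x + π) = - Real.cos x := fun x => by simp [Real.cos_add]
      rw [this]
      ring
    · have hv : ((j - 1 : Fin n) : ℝ) = (j : ℝ) - 1 := by
        rw [Fin.coe_sub_one, if_neg hj]
        have hj1 : 1 ≤ j.val := Nat.pos_of_ne_zero (fun h => hj (Fin.ext h))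
        push_cast [Nat.cast_sub hj1]
        ring
      rw [hv]
      congr 2
      field_simp
      ring
  simp_rw [step]
  have hsurj : Function.Surjective (fun j : Fin n => j - 1) :=
    fun k => ⟨k + 1, by simp⟩
  exact congrArg sInf (hsurj.range_comp (fun j : Fin n => Real.cos (θ - (j : ℝ) * π / n) ^ 2)) |>.trans rfl

lemma Gaux_base_integral (n : ℕ) (hn : 1 ≤ n) :
    ∫ x in (π/2 - π/(2*n))..(π/2 - π/(2*n) + π/n), Real.cos x ^ 2
      = π/(2*n) - Real.sin (π/n) / 2 := by
  have hπ := Real.pi_pos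
  have hn0 : (0:ℝ) < n := by exact_mod_cast Nat.pos_of_ne_zero (by omega)
  rw [integral_cos_sq]
  have hb : π/2 - π/(2*(n:ℝ)) + π/n = π/2 + π/(2*n) := by field_simp; ring
  rw [hb]
  have h1 : Real.cos (π/2 + π/(2*(n:ℝ))) = - Real.sin (π/(2*n)) := by
    rw [Real.cos_add]; simp
  have h2 : Real.sin (π/2 + π/(2*(n:ℝ))) = Real.cos (π/(2*n)) := by
    rw [Real.sin_add]; simp
  have h3 : Real.cos (π/2 - π/(2*(n:ℝ))) = Real.sin (π/(2*n)) := Real.cos_pi_div_two_sub _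
  have h4 : Real.sin (π/2 - π/(2*(n:ℝ))) = Real.cos (π/(2*n)) := Real.sin_pi_div_two_sub _
  rw [h1, h2, h3, h4]
  have h5 : Real.sin (π/(n:ℝ)) = 2 * Real.sin (π/(2*n)) * Real.cos (π/(2*n)) := by
    rw [← Real.sin_two_mul]
    congr 1
    field_simp
  rw [h5]
  field_simp
  ring

lemma Gaux_angular (n : ℕ) (hn : 1 ≤ n) :
    ∫ θ in Set.Ioo (-π) π, Gaux n θ = π - n * Real.sin (π / n) := by
  have hπ := Real.pi_pos
  have hn0 : (0:ℝ) < n := by exact_mod_cast Nat.pos_of_ne_zero (by omega)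
  have hc := Gaux_cont n hn
  have hint : ∀ t₁ t₂, IntervalIntegrable (Gaux n) volume t₁ t₂ :=
    fun t₁ t₂ => hc.intervalIntegrable t₁ t₂
  have h0 : ∫ θ in Set.Ioo (-π) π, Gaux n θ = ∫ θ in (-π)..π, Gaux n θ := by
    rw [intervalIntegral.integral_of_le (by linarith), integral_Ioc_eq_integral_Ioo]
  have harg : -π + ((2*n : ℤ) : ℝ) * (π/n) = π := by push_cast; field_simp; ring
  have h1 := (Gaux_periodic n hn).intervalIntegral_add_zsmul_eq (2*n) (-π) hint
  rw [zsmul_eq_mul, harg] at h1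
  have h2 := (Gaux_periodic n hn).intervalIntegral_add_eq (-π) (π/2 - π/(2*n))
  have h3 : ∫ x in (π/2 - π/(2*n))..(π/2 - π/(2*n) + π/n), Gaux n x
      = ∫ x in (π/2 - π/(2*n))..(π/2 - π/(2*n) + π/n), Real.cos x ^ 2 := by
    apply intervalIntegral.integral_congr
    intro x hx
    have hle : (π/2 - π/(2*(n:ℝ))) ≤ π/2 - π/(2*n) + π/n := by
      have := div_pos hπ hn0; linarith
    rw [Set.uIcc_of_le hle] at hx
    apply Gaux_eq_on n hn
    obtain ⟨ha, hb⟩ := hx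
    constructor
    · exact ha
    · have : π/2 - π/(2*(n:ℝ)) + π/n = π/2 + π/(2*n) := by field_simp; ring
      linarith [this ▸ hb]
  rw [h0, h1, h2, h3, Gaux_base_integral n hn, zsmul_eq_mul]
  push_cast
  field_simp

lemma radial_integral : ∫ r in Set.Ioi (0:ℝ), r^3 * Real.exp (-r^2/2) = 2 := by
  have hderiv : ∀ x ∈ Set.Ici (0:ℝ),
      HasDerivAt (fun r : ℝ => -((r^2+2) * Real.exp (-r^2/2))) (x^3 * Real.exp (-x^2/2)) x := by
    intro x _
    have h1 : HasDerivAt (fun r : ℝ => -r^2/2) (-x) x := by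
      have h := ((hasDerivAt_pow 2 x).div_const 2).neg
      have h' : HasDerivAt (fun r : ℝ => -(r^2/2)) (-x) x := by
        refine h.congr_deriv ?_
        push_cast
        ring
      simpa [neg_div] using h'
    have hexp := h1.exp
    have hpoly : HasDerivAt (fun r : ℝ => r^2+2) (2*x) x := by
      simpa using (hasDerivAt_pow 2 x).add_const 2
    have := (hpoly.mul hexp).neg
    refine this.congr_deriv ?_
    ring
  have hint : IntegrableOn (fun r : ℝ => r^3 * Real.exp (-r^2/2)) (Set.Ioi 0) := by
    have h := integrable_rpow_mul_exp_neg_mul_sq (b := 1/2) (by norm_num) (s := 3) (by norm_num)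
    have heq : (fun x : ℝ => x ^ (3:ℝ) * Real.exp (-(1/2) * x^2))
        = fun x : ℝ => x^3 * Real.exp (-x^2/2) := by
      funext x
      rw [show (3:ℝ) = ((3:ℕ):ℝ) by norm_num, Real.rpow_natCast]
      ring_nf
    rw [heq] at h
    exact h.integrableOn
  have htend : Tendsto (fun r : ℝ => -((r^2+2) * Real.exp (-r^2/2))) atTop (nhds 0) := by
    have hx : Tendsto (fun r : ℝ => r^2/2) atTop atTop :=
      (tendsto_pow_atTop two_ne_zero).atTop_div_const (by norm_num)
    have hg : Tendsto (fun t : ℝ => (2*t+2) * Real.exp (-t)) atTop (nhds 0) := by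
      have a1 := tendsto_pow_mul_exp_neg_atTop_nhds_zero 1
      have a2 := Real.tendsto_exp_neg_atTop_nhds_zero
      have he : (fun t : ℝ => (2*t+2) * Real.exp (-t))
          = fun t : ℝ => 2*(t^1 * Real.exp (-t)) + 2*Real.exp (-t) := by
        funext t; ring
      rw [he]
      simpa using ((a1.const_mul 2).add (a2.const_mul 2))
    have := (hg.comp hx).neg
    have he2 : ((fun t : ℝ => (2*t+2) * Real.exp (-t)) ∘ (fun r : ℝ => r^2/2))
        = fun r : ℝ => (r^2+2) * Real.exp (-r^2/2) := by
      funext r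
      simp only [Function.comp_apply]
      ring_nf
    rw [he2] at this
    simpa using this
  have hcont : ContinuousWithinAt (fun r : ℝ => -((r^2+2) * Real.exp (-r^2/2))) (Set.Ici 0) 0 :=
    (Continuous.continuousWithinAt (by continuity))
  have := integral_Ioi_of_hasDerivAt_of_tendsto hcont (fun x hx => hderiv x (Set.mem_Ioi.1 hx).le) hint htend
  rw [this]
  norm_num

lemma gauss_prod :
    (gaussianReal 0 1).prod (gaussianReal 0 1)
      = (volume : Measure (ℝ × ℝ)).withDensity
          (fun p => gaussianPDF 0 1 p.1 * gaussianPDF 0 1 p.2) := by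
  have h1 : gaussianReal 0 1 = volume.withDensity (gaussianPDF 0 1) :=
    gaussianReal_of_var_ne_zero 0 one_ne_zero
  refine Measure.prod_eq fun s t hs ht => ?_
  rw [withDensity_apply _ (hs.prod ht), Measure.volume_eq_prod, ← Measure.prod_restrict,
    lintegral_prod_mul ((measurable_gaussianPDF 0 1).aemeasurable)
      ((measurable_gaussianPDF 0 1).aemeasurable),
    h1, withDensity_apply _ hs, withDensity_apply _ ht]

lemma integral_gauss_prod (F : ℝ × ℝ → ℝ) :
    ∫ p, F p ∂((gaussianReal 0 1).prod (gaussianReal 0 1))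
      = ∫ p : ℝ × ℝ, (gaussianPDFReal 0 1 p.1 * gaussianPDFReal 0 1 p.2) * F p := by
  rw [gauss_prod]
  have hd : (fun p : ℝ × ℝ => gaussianPDF 0 1 p.1 * gaussianPDF 0 1 p.2)
      = fun p : ℝ × ℝ =>
        ((Real.toNNReal (gaussianPDFReal 0 1 p.1 * gaussianPDFReal 0 1 p.2) : ℝ≥0) : ℝ≥0∞) := by
    funext p
    rw [gaussianPDF, gaussianPDF, ← ENNReal.ofReal_mul (gaussianPDFReal_nonneg _ _ _)]
    rfl
  have hm : Measurable fun p : ℝ × ℝ =>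
      Real.toNNReal (gaussianPDFReal 0 1 p.1 * gaussianPDFReal 0 1 p.2) :=
    (((measurable_gaussianPDFReal 0 1).comp measurable_fst).mul
      ((measurable_gaussianPDFReal 0 1).comp measurable_snd)).real_toNNReal
  rw [hd, integral_withDensity_eq_integral_smul hm F]
  congr 1
  funext p
  rw [NNReal.smul_def, Real.coe_toNNReal _
    (mul_nonneg (gaussianPDFReal_nonneg _ _ _) (gaussianPDFReal_nonneg _ _ _)), smul_eq_mul]

/-- For `z ∼ N(0, I₂)` and `v j = (cos((j-1)π/n), sin((j-1)π/n))`,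
`E[(min_j |⟨z, v j⟩|)²] = 1 - (n/π) sin(π/n)`. -/
theorem second_moment_min_abs_inner (n : ℕ) (hn : 1 ≤ n) :
    ∫ z, (⨅ j : Fin n, |z 0 * Real.cos ((j : ℝ) * π / n)
          + z 1 * Real.sin ((j : ℝ) * π / n)|) ^ 2
        ∂(Measure.pi fun _ : Fin 2 => gaussianReal 0 1)
      = 1 - (n / π) * Real.sin (π / n) := by
  haveI : Nonempty (Fin n) := ⟨⟨0, by omega⟩⟩
  have hπ := Real.pi_pos
  have hn0 : (0:ℝ) < n := by exact_mod_cast Nat.pos_of_ne_zero (by omega)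
  set F : ℝ × ℝ → ℝ := fun p =>
    (⨅ j : Fin n, |p.1 * Real.cos ((j:ℝ) * π / n) + p.2 * Real.sin ((j:ℝ) * π / n)|) ^ 2 with hF
  have step1 : (∫ z, (⨅ j : Fin n, |z 0 * Real.cos ((j : ℝ) * π / n)
          + z 1 * Real.sin ((j : ℝ) * π / n)|) ^ 2
        ∂(Measure.pi fun _ : Fin 2 => gaussianReal 0 1))
      = ∫ p, F p ∂((gaussianReal 0 1).prod (gaussianReal 0 1)) := by
    rw [← (measurePreserving_finTwoArrow (gaussianReal 0 1)).integral_comp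
      (MeasurableEquiv.measurableEmbedding _) F]
    rfl
  rw [step1, integral_gauss_prod]
  rw [← integral_comp_polarCoord_symm (fun p : ℝ × ℝ =>
    gaussianPDFReal 0 1 p.1 * gaussianPDFReal 0 1 p.2 * F p)]
  have hset : polarCoord.target = Set.Ioi (0:ℝ) ×ˢ Set.Ioo (-π) π := rfl
  have hmeas : MeasurableSet polarCoord.target := polarCoord.open_target.measurableSet
  have hpt : ∀ q ∈ polarCoord.target,
      q.1 • (gaussianPDFReal 0 1 (polarCoord.symm q).1
          * gaussianPDFReal 0 1 (polarCoord.symm q).2 * F (polarCoord.symm q))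
      = (fun r : ℝ => r ^ 3 * Real.exp (-r^2/2) / (2*π)) q.1 * Gaux n q.2 := by
    rintro ⟨r, θ⟩ hq
    rw [hset, Set.mem_prod] at hq
    have hr : (0:ℝ) < r := hq.1
    have hsymm : polarCoord.symm (r, θ) = (r * Real.cos θ, r * Real.sin θ) := rfl
    rw [hsymm]
    have hFv : F (r * Real.cos θ, r * Real.sin θ) = r^2 * Gaux n θ := L1 n hn r θ hr.le
    have hpdf : gaussianPDFReal 0 1 (r * Real.cos θ) * gaussianPDFReal 0 1 (r * Real.sin θ)
        = Real.exp (-r^2/2) / (2*π) := by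
      have h2π : (0:ℝ) < 2*π := by linarith
      rw [gaussianPDFReal, gaussianPDFReal]
      simp only [NNReal.coe_one, mul_one, sub_zero]
      have hc : (√(2*π))⁻¹ * Real.exp (-(r * Real.cos θ)^2 / 2)
          * ((√(2*π))⁻¹ * Real.exp (-(r * Real.sin θ)^2 / 2))
          = ((√(2*π)) * (√(2*π)))⁻¹
            * (Real.exp (-(r * Real.cos θ)^2 / 2) * Real.exp (-(r * Real.sin θ)^2 / 2)) := by
        rw [mul_inv]; ring
      rw [hc, Real.mul_self_sqrt h2π.le, ← Real.exp_add]
      have harg : -(r * Real.cos θ)^2 / 2 + -(r * Real.sin θ)^2 / 2 = -r^2/2 := by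
        have := Real.sin_sq_add_cos_sq θ; nlinarith [this]
      rw [harg, inv_mul_eq_div]
    rw [hFv, hpdf, smul_eq_mul]
    ring
  rw [setIntegral_congr_fun hmeas hpt]
  rw [hset, Measure.volume_eq_prod]
  have hsplit := setIntegral_prod_mul (μ := (volume : Measure ℝ)) (ν := (volume : Measure ℝ))
    (fun r : ℝ => r ^ 3 * Real.exp (-r^2/2) / (2*π)) (Gaux n) (Set.Ioi 0) (Set.Ioo (-π) π)
  rw [hsplit, Gaux_angular n hn]
  have hrad : ∫ r in Set.Ioi (0:ℝ), r^3 * Real.exp (-r^2/2) / (2*π) = 1/π := by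
    rw [integral_div, radial_integral]
    field_simp
  rw [hrad]
  field_simp
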